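/- arXiv:2012.14054 — 6 statements merged into one kernel-verified Lean document; each statement's English description precedes it below -/
import Mathlib

section
/- Define q : ℤ_{>0} → ℚ_{>0} by q(1) = 1, q(n) = q(n/2) + 1 if n ≥ 2 is even, and q(n) = 1/q(n−1) if n ≥ 3 is odd. Then q is a bijection from the positive integers onto the positive rationals. -/
section aux

variable (q : ℕ → ℚ) (h1 : q 1 = 1)
    (heven : ∀ n : ℕ, 2 ≤ n → n % 2 = 0 → q n = q (n / 2) + 1)
    (hodd : ∀ n : ℕ, 3 ≤ n → n % 2 = 1 → q n = 1 / q (n - 1))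

include h1 heven hodd

lemma q_pos : ∀ n : ℕ, 0 < n → 0 < q n := by
  intro n
  induction n using Nat.strong_induction_on with
  | _ n ih =>
    intro hn
    rcases (by omega : n = 1 ∨ (2 ≤ n ∧ n % 2 = 0) ∨ (3 ≤ n ∧ n % 2 = 1)) with h | ⟨h2, hp⟩ | ⟨h3, hp⟩
    · rw [h, h1]; norm_num
    · rw [heven n h2 hp]
      have := ih (n / 2) (by omega) (by omega)
      linarith
    · rw [hodd n h3 hp]
      have := ih (n - 1) (by omega) (by omega)
      positivity

lemma q_gt_one : ∀ n : ℕ, 2 ≤ n → n % 2 = 0 → 1 < q n := by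
  intro n h2 hp
  rw [heven n h2 hp]
  have := q_pos q h1 heven hodd (n / 2) (by omega)
  linarith

lemma q_lt_one : ∀ n : ℕ, 3 ≤ n → n % 2 = 1 → q n < 1 := by
  intro n h3 hp
  rw [hodd n h3 hp]
  have h2 : 1 < q (n - 1) := q_gt_one q h1 heven hodd (n - 1) (by omega) (by omega)
  rw [div_lt_one (by linarith)]
  exact h2

lemma q_inj : ∀ m : ℕ, ∀ n : ℕ, 0 < m → 0 < n → q m = q n → m = n := by
  intro m
  induction m using Nat.strong_induction_on with
  | _ m ih =>
    intro n hm hn heq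
    have trich : ∀ k : ℕ, 0 < k →
        (k = 1 ∨ (2 ≤ k ∧ k % 2 = 0) ∨ (3 ≤ k ∧ k % 2 = 1)) := by intro k hk; omega
    rcases trich m hm with h | ⟨h2, hp⟩ | ⟨h3, hp⟩
    · -- q m = 1
      rcases trich n hn with h' | ⟨h2', hp'⟩ | ⟨h3', hp'⟩
      · omega
      · exfalso; have := q_gt_one q h1 heven hodd n h2' hp'
        rw [h, h1] at heq; linarith
      · exfalso; have := q_lt_one q h1 heven hodd n h3' hp'
        rw [h, h1] at heq; linarith
    · -- 1 < q m
      have hgt := q_gt_one q h1 heven hodd m h2 hp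
      rcases trich n hn with h' | ⟨h2', hp'⟩ | ⟨h3', hp'⟩
      · exfalso; rw [h', h1] at heq; linarith
      · rw [heven m h2 hp, heven n h2' hp'] at heq
        have : q (m / 2) = q (n / 2) := by linarith
        have := ih (m / 2) (by omega) (n / 2) (by omega) (by omega) this
        omega
      · exfalso; have := q_lt_one q h1 heven hodd n h3' hp'; linarith
    · -- q m < 1
      have hlt := q_lt_one q h1 heven hodd m h3 hp
      rcases trich n hn with h' | ⟨h2', hp'⟩ | ⟨h3', hp'⟩
      · exfalso; rw [h', h1] at heq; linarith
      · exfalso; have := q_gt_one q h1 heven hodd n h2' hp'; linarith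
      · rw [hodd m h3 hp, hodd n h3' hp'] at heq
        have pm := q_pos q h1 heven hodd (m - 1) (by omega)
        have pn := q_pos q h1 heven hodd (n - 1) (by omega)
        have : q (m - 1) = q (n - 1) := by
          field_simp at heq
          linarith
        have := ih (m - 1) (by omega) (n - 1) (by omega) (by omega) this
        omega

omit h1 heven hodd in
lemma sub_one_num_den {x : ℚ} (hx : 1 < x) :
    (x - 1).num = x.num - x.den ∧ ((x - 1).den : ℤ) = (x.den : ℤ) := by
  have hd0 : (0 : ℚ) < (x.den : ℚ) := by exact_mod_cast x.pos
  have hxeq : x = (x.num : ℚ) / (x.den : ℚ) := (Rat.num_div_den x).symm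
  have hmul : x * (x.den : ℚ) = (x.num : ℚ) := Rat.mul_den_eq_num x
  have heq : x - 1 = ((x.num - x.den : ℤ) : ℚ) / ((x.den : ℤ) : ℚ) := by
    push_cast
    field_simp
    linarith [hmul]
  have hco : Nat.Coprime (x.num - x.den).natAbs ((x.den : ℤ)).natAbs := by
    have hred : IsCoprime x.num (x.den : ℤ) :=
      Int.isCoprime_iff_gcd_eq_one.mpr x.reduced
    have : IsCoprime (x.num - x.den) (x.den : ℤ) := by
      simpa [sub_eq_add_neg] using hred.add_mul_right_left (-1)
    rw [Int.isCoprime_iff_gcd_eq_one] at this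
    exact this
  have hb0 : (0 : ℤ) < (x.den : ℤ) := by exact_mod_cast x.pos
  constructor
  · rw [heq]; exact Rat.num_div_eq_of_coprime hb0 hco
  · rw [heq]; exact Rat.den_div_eq_of_coprime hb0 hco

omit h1 heven hodd in
lemma inv_num_den {x : ℚ} (hx : 0 < x) :
    x⁻¹.num = (x.den : ℤ) ∧ (x⁻¹.den : ℤ) = x.num := by
  have hn0 : (0 : ℤ) < x.num := Rat.num_pos.mpr hx
  have hn0' : (0 : ℚ) < (x.num : ℚ) := by exact_mod_cast hn0
  have hd0 : (0 : ℚ) < (x.den : ℚ) := by exact_mod_cast x.pos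
  have heq : x⁻¹ = ((x.den : ℤ) : ℚ) / ((x.num : ℤ) : ℚ) := by
    rw [Rat.inv_def, Rat.divInt_eq_div]
  have hco : Nat.Coprime ((x.den : ℤ)).natAbs x.num.natAbs := by
    simpa [Nat.coprime_comm] using x.reduced
  constructor
  · rw [heq]; exact Rat.num_div_eq_of_coprime hn0 hco
  · rw [heq]; exact Rat.den_div_eq_of_coprime hn0 hco

lemma q_surj : ∀ k : ℕ, ∀ x : ℚ, 0 < x → x.num.toNat + x.den ≤ k →
    ∃ n : ℕ, 0 < n ∧ q n = x := by
  intro k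
  induction k with
  | zero => intro x hx h; exfalso; have := x.pos; omega
  | succ k ih =>
    intro x hx hk
    rcases lt_trichotomy x 1 with hlt | heq | hgt
    · -- x < 1 : use x⁻¹ - 1
      have hinv : 1 < x⁻¹ := (one_lt_inv₀ hx).mpr hlt
      obtain ⟨hin, hid⟩ := inv_num_den (x := x) hx
      have hnum_pos : 0 < x.num := Rat.num_pos.mpr hx
      obtain ⟨hyn, hyd⟩ := sub_one_num_den hinv
      have hnum_lt : (x⁻¹).den < (x⁻¹).num := by
        have h01 : (0:ℚ) < ((x⁻¹).den : ℚ) := by exact_mod_cast (x⁻¹).pos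
        have h2 : (1:ℚ) < ((x⁻¹).num : ℚ) / ((x⁻¹).den : ℚ) := by
          rw [Rat.num_div_den]; exact hinv
        exact_mod_cast (one_lt_div h01).mp h2
      have hy_pos : 0 < x⁻¹ - 1 := by linarith
      have hmeas : (x⁻¹ - 1).num.toNat + (x⁻¹ - 1).den ≤ k := by
        have hd : (x⁻¹ - 1).den = x⁻¹.den := by exact_mod_cast hyd
        have hnum : (x⁻¹).num = (x.den : ℤ) := hin
        have hden : ((x⁻¹).den : ℤ) = x.num := hid
        have h2 : x.num < (x.den : ℤ) := by
          rw [← hnum, ← hden]; exact_mod_cast hnum_lt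
        omega
      obtain ⟨n, hn, hqn⟩ := ih (x⁻¹ - 1) hy_pos hmeas
      refine ⟨2 * n + 1, by omega, ?_⟩
      rw [hodd (2 * n + 1) (by omega) (by omega)]
      have : (2 * n + 1) - 1 = 2 * n := by omega
      rw [this, heven (2 * n) (by omega) (by omega)]
      have h2 : 2 * n / 2 = n := by omega
      rw [h2, hqn]
      field_simp
      ring
    · exact ⟨1, by omega, by rw [h1, heq]⟩
    · -- 1 < x : use x - 1
      obtain ⟨hyn, hyd⟩ := sub_one_num_den hgt
      have hnum_lt : (x.den : ℤ) < x.num := by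
        have h01 : (0:ℚ) < (x.den : ℚ) := by exact_mod_cast x.pos
        have h2 : (1:ℚ) < (x.num : ℚ) / (x.den : ℚ) := by
          rw [Rat.num_div_den]; exact hgt
        exact_mod_cast (one_lt_div h01).mp h2
      have hy_pos : 0 < x - 1 := by linarith
      have hmeas : (x - 1).num.toNat + (x - 1).den ≤ k := by
        have := x.pos
        omega
      obtain ⟨n, hn, hqn⟩ := ih (x - 1) hy_pos hmeas
      refine ⟨2 * n, by omega, ?_⟩
      rw [heven (2 * n) (by omega) (by omega)]
      have h2 : 2 * n / 2 = n := by omega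
      rw [h2, hqn]
      ring

end aux

/-- Define `q : ℤ_{>0} → ℚ_{>0}` by `q 1 = 1`, `q n = q (n/2) + 1` if `n ≥ 2` is even,
and `q n = 1 / q (n-1)` if `n ≥ 3` is odd. Then `q` is a bijection from the positive
integers onto the positive rationals. -/
theorem q_bijection (q : ℕ → ℚ) (h1 : q 1 = 1)
    (heven : ∀ n : ℕ, 2 ≤ n → n % 2 = 0 → q n = q (n / 2) + 1)
    (hodd : ∀ n : ℕ, 3 ≤ n → n % 2 = 1 → q n = 1 / q (n - 1)) :
    Set.BijOn q {n : ℕ | 0 < n} {x : ℚ | 0 < x} := by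
  refine ⟨fun n hn => q_pos q h1 heven hodd n hn, ?_, ?_⟩
  · intro m hm n hn heq
    exact q_inj q h1 heven hodd m n hm hn heq
  · intro x hx
    obtain ⟨n, hn, hqn⟩ :=
      q_surj q h1 heven hodd (x.num.toNat + x.den) x hx le_rfl
    exact ⟨n, hn, hqn⟩
end

section
/- Define τ : ℕ → ℚ by τ(0) = 0, τ(1) = 1, τ(2) = −1, and for n ≥ 3: τ(n) = τ((n−1)/2) + 1 if n ≡ 3 (mod 4), τ(n) = τ(n/2) − 1 if n ≡ 0 (mod 4), and τ(n) = 1/τ(n−2) if n ≡ 1 or 2 (mod 4). Then τ is a bijection from ℕ onto ℚ. -/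
lemma tauAux_sub_one_eq (q : ℚ) : q - 1 = ((q.num - q.den : ℤ) : ℚ) / (q.den : ℚ) := by
  push_cast
  rw [sub_div, Rat.num_div_den]
  simp [Rat.den_ne_zero q]

lemma tauAux_coprime_sub (q : ℚ) : (q.num - q.den).natAbs.Coprime (q.den:ℤ).natAbs := by
  have h : IsCoprime q.num (q.den:ℤ) := Int.isCoprime_iff_gcd_eq_one.mpr q.reduced
  have h2 : IsCoprime (q.num + (q.den:ℤ) * (-1)) (q.den:ℤ) := h.add_mul_left_left (-1)
  have h3 : IsCoprime (q.num - (q.den:ℤ)) (q.den:ℤ) := by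
    simpa [mul_neg, ← sub_eq_add_neg] using h2
  exact Int.isCoprime_iff_gcd_eq_one.mp h3

lemma tauAux_num_sub_one (q : ℚ) : (q - 1).num = q.num - q.den := by
  rw [tauAux_sub_one_eq]
  exact Rat.num_div_eq_of_coprime (by exact_mod_cast q.pos) (tauAux_coprime_sub q)

lemma tauAux_den_sub_one (q : ℚ) : ((q - 1).den : ℤ) = q.den := by
  rw [tauAux_sub_one_eq]
  exact Rat.den_div_eq_of_coprime (by exact_mod_cast q.pos) (tauAux_coprime_sub q)

lemma tauAux_inv_num_den {q : ℚ} (hq : 0 < q) : q⁻¹.num = q.den ∧ (q⁻¹.den : ℤ) = q.num := by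
  have hnum : 0 < q.num := Rat.num_pos.mpr hq
  have heq : q⁻¹ = ((q.den : ℤ) : ℚ) / ((q.num : ℤ) : ℚ) := by
    rw [Rat.inv_def, Rat.divInt_eq_div]
  have hco : (q.den:ℤ).natAbs.Coprime q.num.natAbs := by
    simpa using q.reduced.symm
  constructor
  · rw [heq]; exact Rat.num_div_eq_of_coprime hnum hco
  · rw [heq]; exact Rat.den_div_eq_of_coprime hnum hco

/-- Define `τ : ℕ → ℚ` by `τ 0 = 0`, `τ 1 = 1`, `τ 2 = -1`, and for `n ≥ 3`:
`τ n = τ ((n-1)/2) + 1` if `n ≡ 3 mod 4`, `τ n = τ (n/2) - 1` if `n ≡ 0 mod 4`, and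
`τ n = 1 / τ (n-2)` if `n ≡ 1, 2 mod 4`. Then `τ` is a bijection from `ℕ` onto `ℚ`. -/
theorem tau_bijection (τ : ℕ → ℚ) (h0 : τ 0 = 0) (h1 : τ 1 = 1) (h2 : τ 2 = -1)
    (h3 : ∀ n : ℕ, 3 ≤ n → n % 4 = 3 → τ n = τ ((n - 1) / 2) + 1)
    (h4 : ∀ n : ℕ, 3 ≤ n → n % 4 = 0 → τ n = τ (n / 2) - 1)
    (h12 : ∀ n : ℕ, 3 ≤ n → (n % 4 = 1 ∨ n % 4 = 2) → τ n = 1 / τ (n - 2)) :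
    Function.Bijective τ := by
  -- convenient forms of the recursion
  have e3 : ∀ k : ℕ, τ (4*k+3) = τ (2*k+1) + 1 := by
    intro k
    have := h3 (4*k+3) (by omega) (by omega)
    rwa [show (4*k+3-1)/2 = 2*k+1 by omega] at this
  have e4 : ∀ k : ℕ, 1 ≤ k → τ (4*k) = τ (2*k) - 1 := by
    intro k hk
    have := h4 (4*k) (by omega) (by omega)
    rwa [show (4*k)/2 = 2*k by omega] at this
  have e1 : ∀ k : ℕ, τ (4*k+5) = 1 / τ (4*k+3) := by
    intro k
    have := h12 (4*k+5) (by omega) (by omega)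
    rwa [show 4*k+5-2 = 4*k+3 by omega] at this
  have e2 : ∀ k : ℕ, 1 ≤ k → τ (4*k+2) = 1 / τ (4*k) := by
    intro k hk
    have := h12 (4*k+2) (by omega) (by omega)
    rwa [show 4*k+2-2 = 4*k by omega] at this
  -- the key structural facts, by strong induction
  have key : ∀ m : ℕ, (0 < τ (2*m+1) ∧ τ (2*m+2) = -τ (2*m+1)) ∧
      ((m % 2 = 1 → 1 < τ (2*m+1)) ∧ (m % 2 = 0 → m ≠ 0 → τ (2*m+1) < 1)) := by
    intro m
    induction m using Nat.strong_induction_on with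
    | h m ih =>
      rcases Nat.even_or_odd m with hme | hmo
      · rcases Nat.eq_zero_or_pos m with rfl | hm
        · refine ⟨⟨by rw [show 2*0+1 = 1 by omega, h1]; norm_num,
            by rw [show 2*0+1 = 1 by omega, show 2*0+2 = 2 by omega, h1, h2]⟩,
            by omega, fun _ h => absurd rfl h⟩
        · obtain ⟨k, rfl⟩ : ∃ k, m = 2*k := by rcases hme with ⟨k, hk⟩; exact ⟨k, by omega⟩
          have hk1 : 1 ≤ k := by omega
          have ih1 := ih (2*k-1) (by omega)
          have hpos : 0 < τ (2*(2*k-1)+1) := ih1.1.1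
          have hgt : 1 < τ (2*(2*k-1)+1) := ih1.2.1 (by omega)
          have hmir : τ (2*(2*k-1)+2) = -τ (2*(2*k-1)+1) := ih1.1.2
          have hne : τ (2*(2*k-1)+1) ≠ 0 := ne_of_gt hpos
          -- τ (4k+1) = 1 / τ (4k-1)
          have hv : τ (2*(2*k)+1) = 1 / τ (2*(2*k-1)+1) := by
            have := e1 (k-1)
            rwa [show 4*(k-1)+5 = 2*(2*k)+1 by omega, show 4*(k-1)+3 = 2*(2*k-1)+1 by omega]
              at this
          have hv2 : τ (2*(2*k)+2) = 1 / τ (2*(2*k-1)+2) := by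
            have := e2 k hk1
            rwa [show 4*k+2 = 2*(2*k)+2 by omega, show 4*k = 2*(2*k-1)+2 by omega] at this
          constructor
          · constructor
            · rw [hv]; positivity
            · rw [hv2, hmir, hv]
              rw [one_div, one_div, inv_neg]
          · constructor
            · intro h; omega
            · intro _ _
              rw [hv]
              rw [div_lt_one hpos]
              exact hgt
      · obtain ⟨k, rfl⟩ : ∃ k, m = 2*k+1 := by rcases hmo with ⟨k, hk⟩; exact ⟨k, by omega⟩
        have ih1 := ih k (by omega)
        have hpos : 0 < τ (2*k+1) := ih1.1.1
        have hmir : τ (2*k+2) = -τ (2*k+1) := ih1.1.2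
        have hv : τ (2*(2*k+1)+1) = τ (2*k+1) + 1 := by
          have := e3 k
          rwa [show 4*k+3 = 2*(2*k+1)+1 by omega] at this
        have hv2 : τ (2*(2*k+1)+2) = τ (2*k+2) - 1 := by
          have := e4 (k+1) (by omega)
          rwa [show 4*(k+1) = 2*(2*k+1)+2 by omega, show 2*(k+1) = 2*k+2 by omega] at this
        refine ⟨⟨by rw [hv]; linarith, by rw [hv2, hmir, hv]; ring⟩,
          fun _ => by rw [hv]; linarith, fun h => by omega⟩
  have apos : ∀ m, 0 < τ (2*m+1) := fun m => (key m).1.1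
  have amir : ∀ m, τ (2*m+2) = -τ (2*m+1) := fun m => (key m).1.2
  have agt : ∀ m, m % 2 = 1 → 1 < τ (2*m+1) := fun m => (key m).2.1
  have alt : ∀ m, m % 2 = 0 → m ≠ 0 → τ (2*m+1) < 1 := fun m => (key m).2.2
  have aone : τ (2*0+1) = 1 := by rw [show 2*0+1 = 1 by omega, h1]
  -- injectivity on odd indices
  have ainj : ∀ s : ℕ, ∀ i j : ℕ, i + j < s → τ (2*i+1) = τ (2*j+1) → i = j := by
    intro s
    induction s with
    | zero => intro i j h; omega
    | succ s ihs =>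
      intro i j hlt heq
      have hclass : ∀ n : ℕ, n ≠ 0 → τ (2*n+1) ≠ 1 := by
        intro n hn
        rcases Nat.even_or_odd n with he | ho
        · have : n % 2 = 0 := by rcases he with ⟨t, ht⟩; omega
          exact ne_of_lt (alt n this hn)
        · have : n % 2 = 1 := by rcases ho with ⟨t, ht⟩; omega
          exact ne_of_gt (agt n this)
      rcases Nat.eq_zero_or_pos i with rfl | hi
      · rcases Nat.eq_zero_or_pos j with rfl | hj
        · rfl
        · exact absurd (heq ▸ aone ▸ rfl : τ (2*j+1) = 1) (hclass j (by omega))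
      · rcases Nat.eq_zero_or_pos j with rfl | hj
        · exact absurd (heq.symm ▸ aone ▸ rfl : τ (2*i+1) = 1) (hclass i (by omega))
        · rcases Nat.even_or_odd i with hie | hio
          · rcases Nat.even_or_odd j with hje | hjo
            · -- both even, positive
              obtain ⟨k, rfl⟩ : ∃ k, i = 2*k := by rcases hie with ⟨t, ht⟩; exact ⟨t, by omega⟩
              obtain ⟨l, rfl⟩ : ∃ l, j = 2*l := by rcases hje with ⟨t, ht⟩; exact ⟨t, by omega⟩
              have hk1 : 1 ≤ k := by omega
              have hl1 : 1 ≤ l := by omega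
              have hvk : τ (2*(2*k)+1) = 1 / τ (2*(2*k-1)+1) := by
                have := e1 (k-1)
                rwa [show 4*(k-1)+5 = 2*(2*k)+1 by omega,
                  show 4*(k-1)+3 = 2*(2*k-1)+1 by omega] at this
              have hvl : τ (2*(2*l)+1) = 1 / τ (2*(2*l-1)+1) := by
                have := e1 (l-1)
                rwa [show 4*(l-1)+5 = 2*(2*l)+1 by omega,
                  show 4*(l-1)+3 = 2*(2*l-1)+1 by omega] at this
              rw [hvk, hvl] at heq
              have hak : τ (2*(2*k-1)+1) ≠ 0 := ne_of_gt (apos _)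
              have hal : τ (2*(2*l-1)+1) ≠ 0 := ne_of_gt (apos _)
              have heq2 : τ (2*(2*k-1)+1) = τ (2*(2*l-1)+1) := by
                rw [← one_div_one_div (τ (2*(2*k-1)+1)), heq, one_div_one_div]
              have := ihs (2*k-1) (2*l-1) (by omega) heq2
              omega
            · -- i even, j odd: contradiction
              have h1' : τ (2*i+1) < 1 := alt i (by rcases hie with ⟨t,ht⟩; omega) (by omega)
              have h2' : 1 < τ (2*j+1) := agt j (by rcases hjo with ⟨t,ht⟩; omega)
              rw [heq] at h1'; linarith
          · rcases Nat.even_or_odd j with hje | hjo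
            · have h1' : 1 < τ (2*i+1) := agt i (by rcases hio with ⟨t,ht⟩; omega)
              have h2' : τ (2*j+1) < 1 := alt j (by rcases hje with ⟨t,ht⟩; omega) (by omega)
              rw [heq] at h1'; linarith
            · -- both odd
              obtain ⟨k, rfl⟩ : ∃ k, i = 2*k+1 := by rcases hio with ⟨t, ht⟩; exact ⟨t, by omega⟩
              obtain ⟨l, rfl⟩ : ∃ l, j = 2*l+1 := by rcases hjo with ⟨t, ht⟩; exact ⟨t, by omega⟩
              have hvk : τ (2*(2*k+1)+1) = τ (2*k+1) + 1 := by
                have := e3 k; rwa [show 4*k+3 = 2*(2*k+1)+1 by omega] at this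
              have hvl : τ (2*(2*l+1)+1) = τ (2*l+1) + 1 := by
                have := e3 l; rwa [show 4*l+3 = 2*(2*l+1)+1 by omega] at this
              rw [hvk, hvl] at heq
              have heq2 : τ (2*k+1) = τ (2*l+1) := by linarith
              have := ihs k l (by omega) heq2
              omega
  -- surjectivity onto positive rationals
  have asurj : ∀ s : ℕ, ∀ q : ℚ, q.num.natAbs + q.den < s → 0 < q → ∃ m, τ (2*m+1) = q := by
    intro s
    induction s with
    | zero => intro q h; omega
    | succ s ihs =>
      intro q hms hq
      have hqnum : 0 < q.num := Rat.num_pos.mpr hq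
      rcases lt_trichotomy q 1 with hlt | heq1 | hgt
      · -- 0 < q < 1 : use inversion then subtraction
        set r : ℚ := q⁻¹ with hr
        have hr1 : 1 < r := one_lt_inv_iff₀.mpr ⟨hq, hlt⟩
        have hrnum : r.num = q.den := (tauAux_inv_num_den hq).1
        have hrden : (r.den : ℤ) = q.num := (tauAux_inv_num_den hq).2
        have hs : 0 < r - 1 := by linarith
        have hsnum : (r-1).num = r.num - r.den := tauAux_num_sub_one r
        have hsden : ((r-1).den : ℤ) = r.den := tauAux_den_sub_one r
        have hnumlt : q.num.natAbs ≥ 1 := by omega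
        have hqden : q.den < q.num.natAbs + q.den := by omega
        have hmeas : (r-1).num.natAbs + (r-1).den < s := by
          have hq1 : q < 1 := hlt
          have : q.num < (q.den : ℤ) := by
            have := q.num_div_den
            by_contra hcon
            push_neg at hcon
            have : (1:ℚ) ≤ q := by
              rw [← q.num_div_den]
              rw [le_div_iff₀ (by exact_mod_cast q.pos)]
              linarith [ (by exact_mod_cast hcon : (q.den : ℚ) ≤ (q.num : ℚ)) ]
            linarith
          omega
        obtain ⟨m', hm'⟩ := ihs (r - 1) hmeas hs
        have ht1 : τ (2*(2*m'+1)+1) = r := by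
          have := e3 m'
          rw [show 4*m'+3 = 2*(2*m'+1)+1 by omega] at this
          rw [this, hm']; ring
        have ht2 : τ (2*(2*m'+2)+1) = q := by
          have := e1 m'
          rw [show 4*m'+5 = 2*(2*m'+2)+1 by omega, show 4*m'+3 = 2*(2*m'+1)+1 by omega] at this
          rw [this, ht1, one_div, hr, inv_inv]
        exact ⟨2*m'+2, ht2⟩
      · exact ⟨0, by rw [heq1]; exact aone⟩
      · -- q > 1 : subtract one
        have hs : 0 < q - 1 := by linarith
        have hsnum : (q-1).num = q.num - q.den := tauAux_num_sub_one q
        have hsden : ((q-1).den : ℤ) = q.den := tauAux_den_sub_one q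
        have hcmp : (q.den : ℤ) < q.num := by
          by_contra hcon
          push_neg at hcon
          have : q ≤ 1 := by
            rw [← q.num_div_den, div_le_one (by exact_mod_cast q.pos)]
            exact_mod_cast hcon
          linarith
        have hdpos := q.pos
        have hmeas : (q-1).num.natAbs + (q-1).den < s := by omega
        obtain ⟨m', hm'⟩ := ihs (q - 1) hmeas hs
        refine ⟨2*m'+1, ?_⟩
        have := e3 m'
        rw [show 4*m'+3 = 2*(2*m'+1)+1 by omega] at this
        rw [this, hm']; ring
  constructor
  · -- injective
    intro a b hab
    have decomp : ∀ n : ℕ, n = 0 ∨ (∃ m, n = 2*m+1) ∨ (∃ m, n = 2*m+2) := by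
      intro n
      rcases Nat.even_or_odd n with ⟨t, ht⟩ | ⟨t, ht⟩
      · rcases Nat.eq_zero_or_pos n with rfl | h
        · exact Or.inl rfl
        · exact Or.inr (Or.inr ⟨t-1, by omega⟩)
      · exact Or.inr (Or.inl ⟨t, by omega⟩)
    have hneg : ∀ m, τ (2*m+2) < 0 := by
      intro m; rw [amir m]; linarith [apos m]
    rcases decomp a with rfl | ⟨i, rfl⟩ | ⟨i, rfl⟩ <;>
      rcases decomp b with rfl | ⟨j, rfl⟩ | ⟨j, rfl⟩
    · rfl
    · exfalso; rw [h0] at hab; linarith [apos j, hab]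
    · exfalso; rw [h0] at hab; linarith [hneg j, hab]
    · exfalso; rw [h0] at hab; linarith [apos i]
    · have := ainj (i+j+1) i j (by omega) hab; omega
    · exfalso; linarith [apos i, hneg j, hab.symm.le, hab.le]
    · exfalso; rw [h0] at hab; linarith [hneg i]
    · exfalso; linarith [hneg i, apos j, hab.le, hab.symm.le]
    · rw [amir i, amir j, neg_inj] at hab
      have := ainj (i+j+1) i j (by omega) hab; omega
  · -- surjective
    intro q
    rcases lt_trichotomy q 0 with hq | rfl | hq
    · obtain ⟨m, hm⟩ := asurj ((-q).num.natAbs + (-q).den + 1) (-q) (by omega) (by linarith)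
      exact ⟨2*m+2, by rw [amir m, hm]; ring⟩
    · exact ⟨0, h0⟩
    · obtain ⟨m, hm⟩ := asurj (q.num.natAbs + q.den + 1) q (by omega) hq
      exact ⟨2*m+1, hm⟩
end

section
/- Let ρ, γ : ℕ → M be two surjections onto a set M such that both E_γ = {(m,n) : γ(m) = γ(n)} and Δ(γ,ρ) = {(m,n) ∈ ℕ² : γ(m) = ρ(n)} are recursively enumerable. If there is a total computable ψ : ℕ → ℕ with γ ∘ ψ = ρ, then Δ(γ,ρ) is recursively enumerable; conversely, if Δ(γ,ρ) is recursively enumerable then there is a total computable φ : ℕ → ℕ with ρ ∘ φ = γ. -/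
open Nat.Partrec (Code)
open Nat.Partrec.Code

/-- Selection lemma: from an r.e. relation on ℕ×ℕ with totality, extract a
total computable choice function. -/
lemma re_selection {p : ℕ × ℕ → Prop} (h : REPred p) (htot : ∀ m, ∃ n, p (m, n)) :
    ∃ φ : ℕ → ℕ, Computable φ ∧ ∀ m, p (m, φ m) := by
  unfold REPred at h
  unfold Partrec at h
  obtain ⟨c, hc⟩ := Nat.Partrec.Code.exists_code.1 h
  have hdec : ∀ m n : ℕ, (Encodable.decode (Nat.pair m n) : Option (ℕ × ℕ)) = some (m, n) := by
    intro m n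
    have : Encodable.encode ((m, n) : ℕ × ℕ) = Nat.pair m n := rfl
    rw [← this, Encodable.encodek]
  have hdom : ∀ m n : ℕ, (eval c (Nat.pair m n)).Dom ↔ p (m, n) := by
    intro m n
    rw [hc]
    simp [hdec m n, Part.assert]
  -- step function
  set step : ℕ → ℕ → Option ℕ := fun m k =>
    (evaln k.unpair.1 c (Nat.pair m k.unpair.2)).map (fun _ => k.unpair.2) with hstep
  have hstepc : Computable₂ step := by
    have h1 : Primrec fun q : ℕ × ℕ =>
        evaln q.2.unpair.1 c (Nat.pair q.1 q.2.unpair.2) := by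
      have := primrec_evaln.comp
        (Primrec.pair
          (Primrec.pair (Primrec.fst.comp (Primrec.unpair.comp Primrec.snd))
            (Primrec.const c))
          (Primrec₂.natPair.comp Primrec.fst
            (Primrec.snd.comp (Primrec.unpair.comp Primrec.snd))))
      exact this
    have h2 : Primrec fun q : ℕ × ℕ => q.2.unpair.2 :=
      Primrec.snd.comp (Primrec.unpair.comp Primrec.snd)
    have : Primrec fun q : ℕ × ℕ =>
        (evaln q.2.unpair.1 c (Nat.pair q.1 q.2.unpair.2)).map (fun _ => q.2.unpair.2) :=
      Primrec.option_map h1 (h2.comp Primrec.fst).to₂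
    exact this.to_comp.to₂
  have hpart : Partrec fun m => Nat.rfindOpt (step m) := Partrec.rfindOpt hstepc
  have hd : ∀ m, (Nat.rfindOpt (step m)).Dom := by
    intro m
    obtain ⟨n, hn⟩ := htot m
    have hdm : (eval c (Nat.pair m n)).Dom := (hdom m n).2 hn
    obtain ⟨x, hx⟩ := Part.dom_iff_mem.1 hdm
    obtain ⟨k, hk⟩ := evaln_complete.1 hx
    refine Nat.rfindOpt_dom.2 ⟨Nat.pair k n, n, ?_⟩
    simp only [hstep, Nat.unpair_pair, Option.mem_def, Option.map_eq_some_iff]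
    exact ⟨x, hk, trivial⟩
  refine ⟨fun m => (Nat.rfindOpt (step m)).get (hd m), ?_, ?_⟩
  · exact hpart.of_eq_tot fun m => Part.get_mem (hd m)
  · intro m
    have hmem : (Nat.rfindOpt (step m)).get (hd m) ∈ Nat.rfindOpt (step m) :=
      Part.get_mem (hd m)
    obtain ⟨k, hk⟩ := Nat.rfindOpt_spec hmem
    simp only [hstep, Option.mem_def, Option.map_eq_some_iff] at hk
    obtain ⟨x, hx, hxe⟩ := hk
    have : (eval c (Nat.pair m k.unpair.2)).Dom :=
      Part.dom_iff_mem.2 ⟨x, evaln_sound hx⟩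
    have := (hdom m k.unpair.2).1 this
    rwa [hxe] at this

/-- Diagonal test for equivalence of presentations. Let `ρ, γ : ℕ → M` be surjections
with `E_γ = {(m,n) : γ m = γ n}` recursively enumerable, and let
`Δ(γ,ρ) = {(m,n) : γ m = ρ n}`. If there is a total computable `ψ` with `γ ∘ ψ = ρ`,
then `Δ(γ,ρ)` is recursively enumerable; conversely, if `Δ(γ,ρ)` is recursively
enumerable then there is a total computable `φ` with `ρ ∘ φ = γ`. -/
theorem diagonal_test_for_equivalence {M : Type*} (ρ γ : ℕ → M)
    (hρ : Function.Surjective ρ) (hγ : Function.Surjective γ)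
    (hE : REPred (fun p : ℕ × ℕ => γ p.1 = γ p.2)) :
    ((∃ ψ : ℕ → ℕ, Computable ψ ∧ γ ∘ ψ = ρ) →
      REPred (fun p : ℕ × ℕ => γ p.1 = ρ p.2)) ∧
    (REPred (fun p : ℕ × ℕ => γ p.1 = ρ p.2) →
      ∃ φ : ℕ → ℕ, Computable φ ∧ ρ ∘ φ = γ) := by
  constructor
  · rintro ⟨ψ, hψc, hψ⟩
    subst hψ
    have hcomp : Computable fun q : ℕ × ℕ => (q.1, ψ q.2) :=
      Computable.fst.pair (hψc.comp Computable.snd)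
    exact (Partrec.comp hE hcomp : _)
  · intro h
    obtain ⟨φ, hφc, hφ⟩ := re_selection h (fun m => (hρ (γ m)).imp fun n hn => hn.symm)
    exact ⟨φ, hφc, funext fun m => (hφ m).symm⟩
end

section
/- Let p be a prime and for j ≥ 1 set a_j = p^{j^j}. Let A ⊆ ℕ be the set of all sums of distinct elements of {a_j : j ≥ 1} (including the empty sum 0). Then for every j ≥ 1, the number of elements of A that are at most p^{j^j} equals 1 + 2^{j−1}; in particular N(A, p^{j^j}) ≤ 2^j. -/
open Finset

private lemma powpow_lt {a b : ℕ} (ha : 1 ≤ a) (hab : a < b) : a ^ a < b ^ b :=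
  lt_of_lt_of_le (Nat.pow_lt_pow_left hab (by omega : a ≠ 0))
    (Nat.pow_le_pow_right (by omega) hab.le)

private lemma powpow_injOn {a b : ℕ} (ha : 1 ≤ a) (hb : 1 ≤ b) (h : a ^ a = b ^ b) : a = b := by
  by_contra hne
  rcases lt_or_gt_of_ne hne with hlt | hlt
  · exact absurd h (powpow_lt ha hlt).ne
  · exact absurd h.symm (powpow_lt hb hlt).ne

/-- Let `p` be prime and `a_j = p^{j^j}` for `j ≥ 1`. Let `A ⊆ ℕ` be the set of all sums
of distinct elements of `{a_j : j ≥ 1}` (including the empty sum `0`). Then for every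
`j ≥ 1`, the number of elements of `A` that are at most `p^{j^j}` equals `1 + 2^{j-1}`;
in particular `N(A, p^{j^j}) ≤ 2^j`. -/
theorem counting_sparse_powers (p : ℕ) (hp : p.Prime)
    (A : Set ℕ)
    (hA : A = {n : ℕ | ∃ S : Finset ℕ, (∀ i ∈ S, 1 ≤ i) ∧ n = ∑ i ∈ S, p ^ i ^ i}) :
    ∀ j : ℕ, 1 ≤ j →
      ({n ∈ A | n ≤ p ^ j ^ j} : Set ℕ).ncard = 1 + 2 ^ (j - 1) ∧
      ({n ∈ A | n ≤ p ^ j ^ j} : Set ℕ).ncard ≤ 2 ^ j := by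
  have hp2 : 2 ≤ p := hp.two_le
  set f : Finset ℕ → ℕ := fun S => ∑ i ∈ S, p ^ i ^ i with hf
  have himg : ∀ S : Finset ℕ, (∀ i ∈ S, 1 ≤ i) →
      f S = ∑ e ∈ S.image (fun i => i ^ i), p ^ e := by
    intro S hS
    rw [Finset.sum_image]
    intro a ha b hb h
    exact powpow_injOn (hS a ha) (hS b hb) h
  -- injectivity of f on finsets of positive naturals
  have hinj : ∀ S T : Finset ℕ, (∀ i ∈ S, 1 ≤ i) → (∀ i ∈ T, 1 ≤ i) →
      f S = f T → S = T := by
    intro S T hS hT h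
    rw [himg S hS, himg T hT] at h
    have himeq : S.image (fun i => i ^ i) = T.image (fun i => i ^ i) :=
      Finset.geomSum_injective hp2 h
    ext a
    constructor
    · intro haS
      have : a ^ a ∈ T.image (fun i => i ^ i) := by
        rw [← himeq]; exact Finset.mem_image_of_mem _ haS
      obtain ⟨b, hbT, hba⟩ := Finset.mem_image.mp this
      rwa [powpow_injOn (hT b hbT) (hS a haS) hba] at hbT
    · intro haT
      have : a ^ a ∈ S.image (fun i => i ^ i) := by
        rw [himeq]; exact Finset.mem_image_of_mem _ haT
      obtain ⟨b, hbS, hba⟩ := Finset.mem_image.mp this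
      rwa [powpow_injOn (hS b hbS) (hT a haT) hba] at hbS
  intro j hj
  -- bound: S ⊆ Icc 1 (j-1) → f S < p^(j^j)
  have hbound : ∀ S : Finset ℕ, S ⊆ Finset.Icc 1 (j - 1) → f S < p ^ j ^ j := by
    intro S hSsub
    have hS1 : ∀ i ∈ S, 1 ≤ i := fun i hi => (Finset.mem_Icc.mp (hSsub hi)).1
    rw [himg S hS1]
    apply Nat.geomSum_lt hp2
    intro e he
    obtain ⟨i, hiS, rfl⟩ := Finset.mem_image.mp he
    have hi := Finset.mem_Icc.mp (hSsub hiS)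
    exact powpow_lt hi.1 (by omega)
  -- the set in question equals the image of the relevant finsets
  have hset : ({n ∈ A | n ≤ p ^ j ^ j} : Set ℕ) =
      ↑((((Finset.Icc 1 (j - 1)).powerset ∪ {({j} : Finset ℕ)}).image f)) := by
    ext n
    simp only [Set.mem_setOf_eq, hA, Finset.coe_image, Set.mem_image, Finset.mem_coe,
      Finset.mem_union, Finset.mem_powerset, Finset.mem_singleton]
    constructor
    · rintro ⟨⟨S, hS1, rfl⟩, hle⟩
      refine ⟨S, ?_, rfl⟩
      by_cases hbig : ∃ i ∈ S, j ≤ i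
      · obtain ⟨i, hiS, hji⟩ := hbig
        -- i > j impossible
        have hij : i = j := by
          by_contra hne
          have hij : j < i := lt_of_le_of_ne hji (Ne.symm hne)
          have : p ^ i ^ i ≤ f S := Finset.single_le_sum (f := fun i => p ^ i ^ i)
            (fun k _ => Nat.zero_le _) hiS
          have : p ^ j ^ j < p ^ i ^ i :=
            Nat.pow_lt_pow_right (by omega) (powpow_lt hj hij)
          have hfS : f S = ∑ i ∈ S, p ^ i ^ i := rfl
          omega
        have hjS : j ∈ S := hij ▸ hiS
        right
        -- S = {j}
        by_contra hne
        obtain ⟨k, hkS, hkj⟩ : ∃ k ∈ S, k ≠ j := by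
          by_contra hall
          push_neg at hall
          exact hne (Finset.eq_singleton_iff_unique_mem.mpr ⟨hjS, hall⟩)
        have h1 : p ^ j ^ j + p ^ k ^ k ≤ f S := by
          have hk' : k ∈ S.erase j := Finset.mem_erase.mpr ⟨hkj, hkS⟩
          have h2 : p ^ k ^ k ≤ ∑ i ∈ S.erase j, p ^ i ^ i :=
            Finset.single_le_sum (f := fun i => p ^ i ^ i)
              (fun i _ => Nat.zero_le _) hk'
          have heq : f S = p ^ j ^ j + ∑ i ∈ S.erase j, p ^ i ^ i :=
            (Finset.add_sum_erase S (fun i => p ^ i ^ i) hjS).symm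
          omega
        have : 0 < p ^ k ^ k := Nat.pow_pos (by omega)
        have hfS : f S = ∑ i ∈ S, p ^ i ^ i := rfl
        omega
      · push_neg at hbig
        left
        intro i hiS
        exact Finset.mem_Icc.mpr ⟨hS1 i hiS, by have := hbig i hiS; omega⟩
    · rintro ⟨S, hS, rfl⟩
      rcases hS with hS | rfl
      · exact ⟨⟨S, fun i hi => (Finset.mem_Icc.mp (hS hi)).1, rfl⟩, (hbound S hS).le⟩
      · refine ⟨⟨{j}, by simpa using hj, rfl⟩, ?_⟩
        simp [hf]
  rw [hset, Set.ncard_coe_finset]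
  have hdisj : ({j} : Finset ℕ) ∉ (Finset.Icc 1 (j - 1)).powerset := by
    simp only [Finset.mem_powerset]
    intro hsub
    have := Finset.mem_Icc.mp (hsub (Finset.mem_singleton_self j))
    omega
  have hcard : (((Finset.Icc 1 (j - 1)).powerset ∪ {({j} : Finset ℕ)}).image f).card
      = 1 + 2 ^ (j - 1) := by
    rw [Finset.card_image_of_injOn, Finset.union_comm, Finset.card_union_of_disjoint,
      Finset.card_singleton, Finset.card_powerset, Nat.card_Icc]
    · simp
    · simpa using hdisj
    · intro S hS T hT h
      have hpos : ∀ U : Finset ℕ, U ∈ (Finset.Icc 1 (j - 1)).powerset ∪ {({j} : Finset ℕ)} →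
          ∀ i ∈ U, 1 ≤ i := by
        intro U hU i hiU
        rcases Finset.mem_union.mp hU with hU | hU
        · exact (Finset.mem_Icc.mp (Finset.mem_powerset.mp hU hiU)).1
        · rw [Finset.mem_singleton] at hU; subst hU
          rw [Finset.mem_singleton] at hiU; omega
      exact hinj S T (hpos S hS) (hpos T hT) h
  rw [hcard]
  refine ⟨rfl, ?_⟩
  have : 2 ^ j = 2 ^ (j - 1) + 2 ^ (j - 1) := by
    rw [← two_mul, ← pow_succ']
    congr 1
    omega
  have h1 : (1 : ℕ) ≤ 2 ^ (j - 1) := Nat.one_le_two_pow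
  omega
end

section
/- Let m ≥ 2 and let A ⊆ ℕ be an infinite set recognizable by a finite deterministic automaton reading base-m digits (least significant first). Then there exist constants x₀ ≥ 1 and c > 0 such that for all x ≥ x₀, the counting function satisfies N(A, x) > c · log x. -/
/-- Let `m ≥ 2` and let `A ⊆ ℕ` be an infinite set recognizable by a finite
deterministic automaton reading base-`m` digits (least significant first). Then there
are constants `x₀ ≥ 1` and `c > 0` such that for all `x ≥ x₀` the counting function
satisfies `N(A, x) > c · log x`. -/
theorem automatic_set_counting_lower_bound (m : ℕ) (hm : 2 ≤ m) (A : Set ℕ)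
    (hA : A.Infinite)
    (hrec : ∃ (σ : Type) (_ : Fintype σ) (M : DFA (Fin m) σ),
      ∀ n : ℕ, n ∈ A ↔ ∃ l : List (Fin m),
        l.map Fin.val = Nat.digits m n ∧ l ∈ M.accepts) :
    ∃ x₀ : ℕ, 1 ≤ x₀ ∧ ∃ c : ℝ, 0 < c ∧ ∀ x : ℕ, x₀ ≤ x →
      c * Real.log x < ({n ∈ A | n ≤ x} : Set ℕ).ncard := by
  obtain ⟨σ, instσ, M, hM⟩ := hrec
  have hm1 : 1 < m := hm
  obtain ⟨n0, hn0A, hn0big⟩ := hA.exists_gt (m ^ Fintype.card σ)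
  have hn0pos : n0 ≠ 0 := by
    have : 0 < m ^ Fintype.card σ := Nat.pow_pos (by omega)
    omega
  obtain ⟨l, hl, hlacc⟩ := (hM n0).mp hn0A
  have hlen : Fintype.card σ ≤ l.length := by
    have h1 : Fintype.card σ ≤ Nat.log m n0 :=
      (Nat.le_log_iff_pow_le hm1 hn0pos).mpr hn0big.le
    have h2 : (Nat.digits m n0).length = Nat.log m n0 + 1 :=
      Nat.digits_len m n0 hm1 hn0pos
    have h3 : l.length = (Nat.digits m n0).length := by rw [← hl, List.length_map]
    omega
  obtain ⟨a, b, c, heq, hablen, hbne, hpump⟩ := M.pumping_lemma hlacc hlen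
  set p := b.length with hp
  have hppos : 0 < p := List.length_pos_iff.mpr hbne
  set L := a.length + c.length with hL
  -- the pumped words
  set f : ℕ → List (Fin m) := fun j => a ++ (List.replicate (j + 1) b).flatten ++ c with hf
  have hfacc : ∀ j, f j ∈ M.accepts := by
    intro j
    apply hpump
    refine (Language.mem_mul).mpr ⟨a ++ (List.replicate (j + 1) b).flatten, ?_, c, rfl, rfl⟩
    refine (Language.mem_mul).mpr ⟨a, rfl, (List.replicate (j + 1) b).flatten, ?_, rfl⟩
    exact Language.join_mem_kstar fun y hy => List.eq_of_mem_replicate hy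
  have hfeq : ∀ j, f j = (a ++ (List.replicate j b).flatten) ++ (b ++ c) := by
    intro j
    simp only [hf, List.replicate_succ', List.flatten_append, List.flatten_cons,
      List.flatten_nil, List.append_nil, List.append_assoc]
  -- the digit strings
  set D : ℕ → List ℕ := fun j => (f j).map Fin.val with hD
  have hbcne : ((b ++ c).map Fin.val) ≠ [] := by
    simp [hbne]
  have hdigsplit : Nat.digits m n0 = a.map Fin.val ++ (b ++ c).map Fin.val := by
    rw [← hl, heq]; simp [List.append_assoc]
  have hlast : ∀ j, (D j).getLast? = (Nat.digits m n0).getLast? := by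
    intro j
    rw [hdigsplit, List.getLast?_append_of_ne_nil _ hbcne]
    show ((f j).map Fin.val).getLast? = _
    rw [hfeq j]
    simp only [List.map_append]
    rw [List.getLast?_append_of_ne_nil _ (by simpa using hbcne)]
  have hdigne : Nat.digits m n0 ≠ [] := Nat.digits_ne_nil_iff_ne_zero.mpr hn0pos
  set g : ℕ → ℕ := fun j => Nat.ofDigits m (D j) with hg
  have hdig : ∀ j, Nat.digits m (g j) = D j := by
    intro j
    refine Nat.digits_ofDigits m hm1 _ ?_ ?_
    · intro d hd
      obtain ⟨i, _, rfl⟩ := List.mem_map.mp hd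
      exact i.isLt
    · intro h
      have h2 := List.getLast?_eq_getLast_of_ne_nil h
      rw [hlast j, List.getLast?_eq_getLast_of_ne_nil hdigne] at h2
      have h3 := Nat.getLast_digit_ne_zero m hn0pos
      intro hc
      rw [hc] at h2
      exact h3 (Option.some_inj.mp h2)
  have hdlen : ∀ j, (D j).length = L + (j + 1) * p := by
    intro j
    show ((f j).map Fin.val).length = L + (j + 1) * p
    rw [hL, hp]
    simp only [hf, List.length_map, List.length_append, List.length_flatten,
      List.map_replicate, List.sum_replicate, smul_eq_mul]
    ring
  have hgpos : ∀ j, g j ≠ 0 := by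
    intro j
    rw [← Nat.digits_ne_nil_iff_ne_zero (b := m), hdig j]
    intro hnil
    have := hdlen j
    rw [hnil] at this
    simp at this
    have hplp : 0 < (j + 1) * p := Nat.mul_pos (Nat.succ_pos j) hppos
    omega
  have hglog : ∀ j, Nat.log m (g j) = L + (j + 1) * p - 1 := by
    intro j
    have h1 := Nat.digits_len m (g j) hm1 (hgpos j)
    rw [hdig j, hdlen j] at h1
    omega
  have hgA : ∀ j, g j ∈ A := fun j => (hM (g j)).mpr ⟨f j, (hdig j).symm, hfacc j⟩
  have hglt : ∀ j, g j < m ^ (L + (j + 1) * p) := by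
    intro j
    have := Nat.lt_base_pow_length_digits (b := m) (m := g j) hm1
    rwa [hdig j, hdlen j] at this
  have hmono : StrictMono g := by
    intro i j hij
    have h2 : m ^ (L + (j + 1) * p - 1) ≤ g j := by
      rw [← hglog j]
      exact Nat.pow_log_le_self m (hgpos j)
    have h3 : L + (i + 1) * p ≤ L + (j + 1) * p - 1 := by
      have hc : (i + 1) * p + 1 ≤ (j + 1) * p := by
        calc (i + 1) * p + 1 ≤ (i + 1) * p + p := by omega
          _ = (i + 2) * p := by ring
          _ ≤ (j + 1) * p := Nat.mul_le_mul_right p (by omega)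
      omega
    exact (hglt i).trans_le ((Nat.pow_le_pow_right (by omega) h3).trans h2)
  -- conclusion
  refine ⟨m ^ (2 * (L + p) + 1), Nat.one_le_pow _ _ (by omega),
    1 / (4 * p * Real.log m), ?_, ?_⟩
  · have hlogm : 0 < Real.log m := Real.log_pos (by exact_mod_cast hm1)
    positivity
  · intro x hx
    have hlogm : 0 < Real.log m := Real.log_pos (by exact_mod_cast hm1)
    set K := Nat.log m x with hK
    have hxpos : x ≠ 0 := by
      have : 0 < m ^ (2 * (L + p) + 1) := Nat.pow_pos (by omega)
      omega
    have hKge : 2 * (L + p) + 1 ≤ K := by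
      calc 2 * (L + p) + 1 = Nat.log m (m ^ (2 * (L + p) + 1)) :=
            (Nat.log_pow hm1 _).symm
        _ ≤ K := Nat.log_mono_right hx
    set k := (K - L) / p with hk
    have hnat : K + 1 < 4 * (p * k) := by
      have h1 := Nat.div_add_mod (K - L) p
      have h2 := Nat.mod_lt (K - L) hppos
      rw [← hk] at h1
      set P := p * k
      set r := (K - L) % p
      omega
    have hmem : ∀ j, j < k → g j ∈ A ∧ g j ≤ x := by
      intro j hj
      refine ⟨hgA j, ?_⟩
      have hkp : k * p ≤ K - L := Nat.div_mul_le_self _ _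
      have h2 : L + (j + 1) * p ≤ K := by
        have hjk : (j + 1) * p ≤ k * p := Nat.mul_le_mul_right p (by omega)
        calc L + (j + 1) * p ≤ L + k * p := Nat.add_le_add_left hjk L
          _ ≤ L + (K - L) := Nat.add_le_add_left hkp L
          _ = K := by omega
      calc g j ≤ m ^ (L + (j + 1) * p) - 1 := by have := hglt j; omega
        _ ≤ m ^ K - 1 := by
            have := Nat.pow_le_pow_right (show 0 < m by omega) h2
            omega
        _ ≤ x := by
            have h := Nat.pow_log_le_self m hxpos
            rw [← hK] at h
            omega
    have hSfin : ({n ∈ A | n ≤ x} : Set ℕ).Finite :=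
      (Set.finite_Iic x).subset fun y hy => hy.2
    have hsub : (((Finset.range k).image g : Finset ℕ) : Set ℕ) ⊆ {n ∈ A | n ≤ x} := by
      intro y hy
      simp only [Finset.coe_image, Finset.coe_range, Set.mem_image, Set.mem_Iio] at hy
      obtain ⟨j, hj, rfl⟩ := hy
      exact hmem j hj
    have hcard : k ≤ ({n ∈ A | n ≤ x} : Set ℕ).ncard := by
      have h := Set.ncard_le_ncard hsub hSfin
      rwa [Set.ncard_coe_finset, Finset.card_image_of_injective _ hmono.injective,
        Finset.card_range] at h
    have hxlog : Real.log x ≤ (K + 1) * Real.log m := by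
      have h1 : (x : ℝ) ≤ (m : ℝ) ^ (K + 1) := by
        exact_mod_cast (Nat.lt_pow_succ_log_self hm1 x).le
      calc Real.log x ≤ Real.log ((m : ℝ) ^ (K + 1)) :=
            Real.log_le_log (by exact_mod_cast Nat.pos_of_ne_zero hxpos) h1
        _ = (K + 1) * Real.log m := by rw [Real.log_pow]; push_cast; ring
    have hple : (0:ℝ) < p := by exact_mod_cast hppos
    have hc1 : 1 / (4 * p * Real.log m) * Real.log x ≤ ((K:ℝ) + 1) / (4 * p) := by
      have h := mul_le_mul_of_nonneg_left hxlog
        (le_of_lt (show (0:ℝ) < 1 / (4 * p * Real.log m) by positivity))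
      calc 1 / (4 * p * Real.log m) * Real.log x
          ≤ 1 / (4 * p * Real.log m) * (((K:ℝ) + 1) * Real.log m) := h
        _ = ((K:ℝ) + 1) / (4 * p) := by
            field_simp
    have hc2 : ((K:ℝ) + 1) / (4 * p) < k := by
      rw [div_lt_iff₀ (by positivity)]
      have h : ((K:ℝ) + 1) < 4 * (p * k) := by exact_mod_cast hnat
      nlinarith
    have hc3 : (k : ℝ) ≤ ({n ∈ A | n ≤ x} : Set ℕ).ncard := by exact_mod_cast hcard
    linarith
end

section
/- Let k be a field and consider the field k(t) of rational functions. The subset k ⊆ k(t) of constant functions is existentially definable in k(t) when k is algebraically closed of characteristic 0 in the following weak sense: every x ∈ k satisfies ∃ y, y² = x³ + 1 in k(t), while by the Riemann–Hurwitz formula any x ∈ ℂ(t) satisfying ∃ y ∈ ℂ(t), y² = x³ + 1 must be constant. Formally: for x ∈ ℂ(t), there exists y ∈ ℂ(t) with y² = x³ + 1 if and only if x ∈ ℂ. -/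
open Polynomial

private lemma croot3 (e : ℂ) (he : e ≠ 0) : ∃ z : ℂ, z ≠ 0 ∧ z ^ 3 = e := by
  obtain ⟨z, hz⟩ := IsAlgClosed.exists_pow_nat_eq e (n := 3) (by norm_num)
  refine ⟨z, fun h => he ?_, hz⟩
  rw [← hz, h]; ring

private lemma unit_form {u : ℂ[X]} (hu : IsUnit u) : ∃ e : ℂ, e ≠ 0 ∧ u = C e := by
  obtain ⟨r, hr, hru⟩ := Polynomial.isUnit_iff.mp hu
  exact ⟨r, hr.ne_zero, hru.symm⟩

private lemma flt3 {a b c : ℂ[X]} (ha : a ≠ 0) (hb : b ≠ 0) (hc : c ≠ 0)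
    (hab : IsCoprime a b) (h : a ^ 3 + b ^ 3 = c ^ 3) :
    a.natDegree = 0 ∧ b.natDegree = 0 ∧ c.natDegree = 0 := by
  classical
  have hbc : IsCoprime (b ^ 3) (c ^ 3) := by
    have := (hab.pow (m := 3) (n := 3)).symm.add_mul_left_right 1
    rwa [mul_one, h] at this
  have hca : IsCoprime (c ^ 3) (a ^ 3) := by
    have := (hab.pow (m := 3) (n := 3)).add_mul_left_right 1
    rw [mul_one, add_comm, h] at this
    exact this.symm
  have habc := Polynomial.abc (pow_ne_zero 3 ha) (pow_ne_zero 3 hb)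
    (neg_ne_zero.mpr (pow_ne_zero 3 hc)) (hab.pow)
    (by ring_nf; linear_combination h)
  rcases habc with ⟨h1, h2, h3⟩ | ⟨h1, h2, h3⟩
  · exfalso
    have hprod : a ^ 3 * b ^ 3 * -(c ^ 3) = (a * b * -c) ^ 3 := by ring
    rw [hprod, UniqueFactorizationMonoid.radical_pow _ (by norm_num)] at h1 h2 h3
    have habc0 : a * b * -c ≠ 0 := by simp [ha, hb, hc]
    have hrd : (UniqueFactorizationMonoid.radical (a * b * -c)).natDegree ≤
        (a * b * -c).natDegree :=
      Polynomial.natDegree_le_of_dvd (UniqueFactorizationMonoid.radical_dvd_self (a := a * b * -c)) habc0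
    rw [natDegree_pow] at h1 h2
    have hd : (a * b * -c).natDegree = a.natDegree + b.natDegree + c.natDegree := by
      rw [natDegree_mul (mul_ne_zero ha hb) (neg_ne_zero.mpr hc), natDegree_mul ha hb,
        natDegree_neg]
    rw [natDegree_neg, natDegree_pow] at h3
    omega
  · have e1 : (a ^ 3).natDegree = 0 := natDegree_eq_zero_of_derivative_eq_zero h1
    have e2 : (b ^ 3).natDegree = 0 := natDegree_eq_zero_of_derivative_eq_zero h2
    have e3 : ((-(c ^ 3) : ℂ[X])).natDegree = 0 := natDegree_eq_zero_of_derivative_eq_zero h3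
    rw [natDegree_pow] at e1 e2
    rw [natDegree_neg, natDegree_pow] at e3
    omega

/-- For `x ∈ ℂ(t)`, there exists `y ∈ ℂ(t)` with `y² = x³ + 1` if and only if `x` is a
constant (an element of `ℂ`). -/
theorem elliptic_defines_constants (x : RatFunc ℂ) :
    (∃ y : RatFunc ℂ, y ^ 2 = x ^ 3 + 1) ↔
      x ∈ Set.range (RatFunc.C : ℂ →+* RatFunc ℂ) := by
  constructor
  · rintro ⟨y, hy⟩
    by_cases hx : x = 0
    · exact ⟨0, by simp [hx]⟩
    classical
    set p := x.num with hp
    set q := x.denom with hqdef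
    set r := y.num with hr
    set s := y.denom with hsdef
    have hq0 : q ≠ 0 := x.denom_ne_zero
    have hs0 : s ≠ 0 := y.denom_ne_zero
    have hp0 : p ≠ 0 := RatFunc.num_ne_zero hx
    have hcopq : IsCoprime p q := RatFunc.isCoprime_num_denom x
    have hcors : IsCoprime r s := RatFunc.isCoprime_num_denom y
    -- the polynomial identity
    have key : r ^ 2 * q ^ 3 = (p ^ 3 + q ^ 3) * s ^ 2 := by
      apply RatFunc.algebraMap_injective ℂ
      have h1 : ((algebraMap ℂ[X] (RatFunc ℂ)) r / (algebraMap ℂ[X] (RatFunc ℂ)) s) ^ 2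
          = ((algebraMap ℂ[X] (RatFunc ℂ)) p / (algebraMap ℂ[X] (RatFunc ℂ)) q) ^ 3 + 1 := by
        rw [RatFunc.num_div_denom, RatFunc.num_div_denom]; exact hy
      have hq0' : (algebraMap ℂ[X] (RatFunc ℂ)) q ≠ 0 := RatFunc.algebraMap_ne_zero hq0
      have hs0' : (algebraMap ℂ[X] (RatFunc ℂ)) s ≠ 0 := RatFunc.algebraMap_ne_zero hs0
      field_simp at h1
      push_cast [map_mul, map_pow, map_add]
      linear_combination h1
    have hmain : (r - s) * (r + s) * q ^ 3 = p ^ 3 * s ^ 2 := by linear_combination key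
    -- s^2 and q^3 are associated
    have hcsr : IsCoprime s (r - s) := by
      have := hcors.symm.add_mul_left_right (-1)
      rwa [mul_neg_one, ← sub_eq_add_neg] at this
    have hcsr' : IsCoprime s (r + s) := by
      have := hcors.symm.add_mul_left_right 1
      rwa [mul_one] at this
    have hd1 : s ^ 2 ∣ q ^ 3 := by
      have hdvd : s ^ 2 ∣ (r - s) * (r + s) * q ^ 3 := ⟨p ^ 3, by linear_combination hmain⟩
      exact ((hcsr.mul_right hcsr').pow_left).dvd_of_dvd_mul_right
        (by rwa [mul_comm] at hdvd)
    have hd2 : q ^ 3 ∣ s ^ 2 := by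
      have hdvd : q ^ 3 ∣ p ^ 3 * s ^ 2 := ⟨(r - s) * (r + s), by linear_combination -hmain⟩
      exact ((hcopq.symm.pow (m := 3) (n := 3))).dvd_of_dvd_mul_left hdvd
    obtain ⟨u, hu⟩ := associated_of_dvd_dvd hd1 hd2
    obtain ⟨e, he0, heu⟩ := unit_form u.isUnit
    rw [heu] at hu
    -- gcd decomposition:  s = g * m, q = g * q₁ with m, q₁ coprime
    set g := GCDMonoid.gcd s q with hgdef
    have hgs : g ∣ s := gcd_dvd_left s q
    have hgq : g ∣ q := gcd_dvd_right s q
    have hg0 : g ≠ 0 := fun h => hs0 ((gcd_eq_zero_iff s q).mp h).1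
    set m := s / g with hmdef
    set q₁ := q / g with hq₁def
    have hsm : s = g * m := (EuclideanDomain.mul_div_cancel' hg0 hgs).symm
    have hqq₁ : q = g * q₁ := (EuclideanDomain.mul_div_cancel' hg0 hgq).symm
    have hm0 : m ≠ 0 := fun h => hs0 (by rw [hsm, h, mul_zero])
    have hq₁0 : q₁ ≠ 0 := fun h => hq0 (by rw [hqq₁, h, mul_zero])
    have hcop1 : IsCoprime m q₁ := isCoprime_div_gcd_div_gcd hq0
    -- q₁ is a unit
    have hcanc : m ^ 2 * C e = g * q₁ ^ 3 := by
      apply mul_left_cancel₀ (pow_ne_zero 2 hg0)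
      rw [hsm, hqq₁] at hu
      linear_combination hu
    have hq₁dvd : q₁ ∣ m ^ 2 := by
      have h3 : q₁ ∣ m ^ 2 * C e := ⟨g * q₁ ^ 2, by linear_combination hcanc⟩
      have h4 : q₁ ∣ m ^ 2 * C e * C e⁻¹ := h3.mul_right _
      rwa [mul_assoc, ← map_mul, mul_inv_cancel₀ he0, map_one, mul_one] at h4
    obtain ⟨f, hf0, hfq₁⟩ := unit_form ((hcop1.symm.pow_right (n := 2)).isUnit_of_dvd hq₁dvd)
    rw [hfq₁] at hcanc
    -- values of g, s, q
    set k₂ : ℂ := e / f ^ 3 with hk₂def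
    set k₁ : ℂ := e / f ^ 2 with hk₁def
    have hk₂0 : k₂ ≠ 0 := div_ne_zero he0 (pow_ne_zero 3 hf0)
    have hk₁0 : k₁ ≠ 0 := div_ne_zero he0 (pow_ne_zero 2 hf0)
    have hCf0 : (C f : ℂ[X]) ≠ 0 := fun h => hf0 (C_eq_zero.mp h)
    have hC1 : (C k₂ : ℂ[X]) * (C f) ^ 3 = C e := by
      rw [← map_pow, ← map_mul, hk₂def, div_mul_cancel₀ _ (pow_ne_zero 3 hf0)]
    have hgval : g = m ^ 2 * C k₂ := by
      apply mul_right_cancel₀ (pow_ne_zero 3 hCf0)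
      linear_combination -hcanc - m ^ 2 * hC1
    have hsval : s = m ^ 3 * C k₂ := by rw [hsm, hgval]; ring
    have hqval : q = m ^ 2 * C k₁ := by
      have hC2 : (C k₂ : ℂ[X]) * C f = C k₁ := by
        rw [← map_mul]
        congr 1
        rw [hk₂def, hk₁def]
        field_simp
      rw [hqq₁, hgval, hfq₁]
      linear_combination m ^ 2 * hC2
    -- cancel m^6 from the main identity
    set d : ℂ := k₂ ^ 2 / k₁ ^ 3 with hddef
    have hd0 : d ≠ 0 := div_ne_zero (pow_ne_zero 2 hk₂0) (pow_ne_zero 3 hk₁0)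
    have hCk₁0 : (C k₁ : ℂ[X]) ≠ 0 := fun h => hk₁0 (C_eq_zero.mp h)
    have hmain2 : (r - s) * (r + s) = p ^ 3 * C d := by
      have hC3 : (C d : ℂ[X]) * (C k₁) ^ 3 = (C k₂) ^ 2 := by
        rw [← map_pow, ← map_pow, ← map_mul, hddef, div_mul_cancel₀ _ (pow_ne_zero 3 hk₁0)]
      apply mul_right_cancel₀ (b := (C k₁) ^ 3 * m ^ 6)
        (mul_ne_zero (pow_ne_zero 3 hCk₁0) (pow_ne_zero 6 hm0))
      linear_combination hmain - (r - s) * (r + s) * (q ^ 2 + q * (m ^ 2 * C k₁) +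
        (m ^ 2 * C k₁) ^ 2) * hqval + p ^ 3 * (s + m ^ 3 * C k₂) * hsval - p ^ 3 * m ^ 6 * hC3
    -- (r-s) and (r+s) are coprime
    have hcoprr : IsCoprime (r - s) (r + s) := by
      obtain ⟨μ, ν, hμν⟩ := hcors
      have h2 : (C 2⁻¹ : ℂ[X]) * 2 = 1 := by
        rw [← map_ofNat (C : ℂ →+* ℂ[X]) 2, ← map_mul]
        norm_num
      exact ⟨C 2⁻¹ * (μ - ν), C 2⁻¹ * (μ + ν), by
        linear_combination (C 2⁻¹ * 2) * hμν + h2⟩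
    -- both factors nonzero
    have hrs0 : (r - s) * (r + s) ≠ 0 := by
      rw [hmain2]
      exact mul_ne_zero (pow_ne_zero 3 hp0) (fun h => hd0 (C_eq_zero.mp h))
    have hrm : r - s ≠ 0 := fun h => hrs0 (by rw [h, zero_mul])
    have hrp : r + s ≠ 0 := fun h => hrs0 (by rw [h, mul_zero])
    -- extract cubes
    obtain ⟨d₃, hd₃0, hd₃⟩ := croot3 d hd0
    have hcube : (r - s) * (r + s) = (p * C d₃) ^ 3 := by
      rw [hmain2, mul_pow, ← map_pow, hd₃]
    obtain ⟨a, ha⟩ := exists_associated_pow_of_mul_eq_pow' hcoprr hcube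
    obtain ⟨b, hb⟩ := exists_associated_pow_of_mul_eq_pow' hcoprr.symm
      (by rwa [mul_comm] at hcube)
    obtain ⟨u₄, hu₄⟩ := ha
    obtain ⟨u₅, hu₅⟩ := hb
    obtain ⟨c₄, hc₄0, hc₄⟩ := unit_form u₄.isUnit
    obtain ⟨c₅, hc₅0, hc₅⟩ := unit_form u₅.isUnit
    rw [hc₄] at hu₄
    rw [hc₅] at hu₅
    -- a, b nonzero
    have ha0 : a ≠ 0 := by
      intro h; rw [h] at hu₄; simp at hu₄; exact hrm hu₄.symm
    have hb0 : b ≠ 0 := by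
      intro h; rw [h] at hu₅; simp at hu₅; exact hrp hu₅.symm
    -- the Fermat equation
    obtain ⟨α, hα0, hα⟩ := croot3 c₄ hc₄0
    obtain ⟨β, hβ0, hβ⟩ := croot3 c₅ hc₅0
    obtain ⟨γ, hγ0, hγ⟩ := croot3 (2 * k₂) (mul_ne_zero two_ne_zero hk₂0)
    have hαC : (C α : ℂ[X]) ^ 3 = C c₄ := by rw [← map_pow, hα]
    have hβC : (C β : ℂ[X]) ^ 3 = C c₅ := by rw [← map_pow, hβ]
    have hγC : (C γ : ℂ[X]) ^ 3 = 2 * C k₂ := by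
      rw [← map_pow, hγ, map_mul, map_ofNat]
    have h2s : b ^ 3 * C c₅ - a ^ 3 * C c₄ = 2 * (m ^ 3 * C k₂) := by
      rw [hu₄, hu₅, hsval]; ring
    have hflt : (C α * a) ^ 3 + (C γ * m) ^ 3 = (C β * b) ^ 3 := by
      linear_combination a ^ 3 * hαC + m ^ 3 * hγC - b ^ 3 * hβC - h2s
    -- coprimality for FLT
    have hcopam : IsCoprime (C α * a) (C γ * m) := by
      have haam : IsCoprime a m := by
        have hadvd : a ∣ r - s := by
          rw [← hu₄]; exact ⟨a ^ 2 * C c₄, by ring⟩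
        have hmdvd : m ∣ s := ⟨g, by rw [hsm]; ring⟩
        exact (hcsr.symm.of_isCoprime_of_dvd_left hadvd).of_isCoprime_of_dvd_right hmdvd
      obtain ⟨μ, ν, hμν⟩ := haam
      have hCα : (C α : ℂ[X]) * C α⁻¹ = 1 := by
        rw [← map_mul, mul_inv_cancel₀ hα0, map_one]
      have hCγ : (C γ : ℂ[X]) * C γ⁻¹ = 1 := by
        rw [← map_mul, mul_inv_cancel₀ hγ0, map_one]
      exact ⟨C α⁻¹ * μ, C γ⁻¹ * ν, by linear_combination a * μ * hCα + m * ν * hCγ + hμν⟩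
    have hCα0 : (C α : ℂ[X]) ≠ 0 := fun h => hα0 (C_eq_zero.mp h)
    have hCβ0 : (C β : ℂ[X]) ≠ 0 := fun h => hβ0 (C_eq_zero.mp h)
    have hCγ0 : (C γ : ℂ[X]) ≠ 0 := fun h => hγ0 (C_eq_zero.mp h)
    obtain ⟨da, dm, db⟩ := flt3 (mul_ne_zero hCα0 ha0) (mul_ne_zero hCγ0 hm0)
      (mul_ne_zero hCβ0 hb0) hcopam hflt
    -- extract degrees
    rw [natDegree_mul hCα0 ha0, natDegree_C] at da
    rw [natDegree_mul hCγ0 hm0, natDegree_C] at dm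
    rw [natDegree_mul hCβ0 hb0, natDegree_C] at db
    -- q and p are constants
    have hqdeg : q.natDegree = 0 := by
      rw [hqval, natDegree_mul (pow_ne_zero 2 hm0) hCk₁0, natDegree_pow, natDegree_C]
      omega
    have hpdeg : p.natDegree = 0 := by
      have hCc₄0 : (C c₄ : ℂ[X]) ≠ 0 := fun h => hc₄0 (C_eq_zero.mp h)
      have hCc₅0 : (C c₅ : ℂ[X]) ≠ 0 := fun h => hc₅0 (C_eq_zero.mp h)
      have hCd0 : (C d : ℂ[X]) ≠ 0 := fun h => hd0 (C_eq_zero.mp h)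
      have hlhs : ((r - s) * (r + s)).natDegree = 0 := by
        rw [natDegree_mul hrm hrp, ← hu₄, ← hu₅,
          natDegree_mul (pow_ne_zero 3 ha0) hCc₄0,
          natDegree_mul (pow_ne_zero 3 hb0) hCc₅0, natDegree_pow, natDegree_pow,
          natDegree_C, natDegree_C]
        omega
      rw [hmain2, natDegree_mul (pow_ne_zero 3 hp0) hCd0, natDegree_pow, natDegree_C] at hlhs
      omega
    -- conclude
    refine ⟨p.coeff 0 / q.coeff 0, ?_⟩
    have hpc : p = C (p.coeff 0) := eq_C_of_natDegree_eq_zero hpdeg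
    have hqc : q = C (q.coeff 0) := eq_C_of_natDegree_eq_zero hqdeg
    rw [map_div₀, ← RatFunc.algebraMap_C, ← RatFunc.algebraMap_C, ← hpc, ← hqc,
      RatFunc.num_div_denom]
  · rintro ⟨c, rfl⟩
    obtain ⟨z, hz⟩ := IsAlgClosed.exists_pow_nat_eq (c ^ 3 + 1) (n := 2) (by norm_num)
    exact ⟨RatFunc.C z, by rw [← map_pow, hz, map_add, map_pow, map_one]⟩
end
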